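/- arXiv:2012.01014 — 4 statements merged into one kernel-verified Lean document; each statement's English description precedes it below -/
import Mathlib

section
/- Let (φ_i)_{i ∈ ι} be a family of nonzero eigenvectors of A (A φ_i = λ_i • φ_i with λ_i real) that is orthogonal in H (⟨φ_i, φ_j⟩ = 0 for i ≠ j) and complete in H (the linear span of {φ_i} is dense in H). Then for every real r > 0 the family is orthogonal with respect to the r-th left-definite inner product, i.e. ⟨A^{r/2} φ_i, A^{r/2} φ_j⟩ = 0 for i ≠ j, and it is complete with respect to it, i.e. if x ∈ H satisfies ⟨A^{r/2} x, A^{r/2} φ_i⟩ = 0 for all i, then x = 0. (Bounded-operator case of Littlejohn–Wellman's Theorem 3.7 on stability of complete orthogonal systems of eigenfunctions in left-definite spaces.) -/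
open scoped InnerProductSpace ComplexOrder

open scoped NNReal


section LWaux
variable {H : Type*} [NormedAddCommGroup H] [InnerProductSpace ℂ H] [CompleteSpace H]

lemma LW.cfcHom_apply_eigvec (A : H →L[ℂ] H) (hA : IsSelfAdjoint A)
    (μ : ℝ) (hμ : μ ∈ spectrum ℝ A) (φ : H) (hφ : A φ = (μ : ℂ) • φ)
    (g : C(spectrum ℝ A, ℝ)) :
    cfcHom hA g φ = ((g ⟨μ, hμ⟩ : ℝ) : ℂ) • φ := by
  induction g using ContinuousMap.induction_on_of_compact with
  | const c =>
    have h1 : (ContinuousMap.const (spectrum ℝ A) c) = algebraMap ℝ C(spectrum ℝ A, ℝ) c := rfl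
    rw [h1, AlgHomClass.commutes, Algebra.algebraMap_eq_smul_one]
    exact (Complex.coe_smul c φ).symm
  | id =>
    rw [cfcHom_id hA]
    simpa using hφ
  | star_id =>
    rw [star_trivial, cfcHom_id hA]
    simpa using hφ
  | add f g hf hg =>
    rw [map_add, ContinuousLinearMap.add_apply, hf, hg, ContinuousMap.add_apply]
    push_cast
    rw [add_smul]
  | mul f g hf hg =>
    rw [map_mul, ContinuousLinearMap.mul_apply, hg, map_smul, hf, smul_smul,
      ContinuousMap.mul_apply]
    push_cast
    ring_nf
  | frequently f hf =>
    have hcl : IsClosed {g : C(spectrum ℝ A, ℝ) | cfcHom hA g φ = ((g ⟨μ, hμ⟩ : ℝ) : ℂ) • φ} := by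
      apply isClosed_eq
      · exact (ContinuousLinearMap.apply ℂ H φ).continuous.comp
          (cfcHom_isClosedEmbedding hA).continuous
      · exact (continuous_smul.comp ((Complex.continuous_ofReal.comp
          (ContinuousEvalConst.continuous_eval_const _)).prodMk continuous_const))
    exact hcl.closure_subset (mem_closure_iff_frequently.mpr hf)

lemma LW.cfc_apply_eigvec (A : H →L[ℂ] H) (hA : IsSelfAdjoint A)
    (μ : ℝ) (hμ : μ ∈ spectrum ℝ A) (φ : H) (hφ : A φ = (μ : ℂ) • φ)
    (f : ℝ → ℝ) (hf : ContinuousOn f (spectrum ℝ A)) :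
    cfc f A φ = ((f μ : ℝ) : ℂ) • φ := by
  rw [cfc_apply f A hA hf]
  exact LW.cfcHom_apply_eigvec A hA μ hμ φ hφ ⟨_, hf.restrict⟩

lemma LW.mem_spectrum (A : H →L[ℂ] H) (μ : ℝ) (φ : H) (hne : φ ≠ 0)
    (hφ : A φ = (μ : ℂ) • φ) : μ ∈ spectrum ℝ A := by
  rw [spectrum.mem_iff]
  intro hu
  have h0 : (algebraMap ℝ (H →L[ℂ] H) μ - A) φ = 0 := by
    simp [Algebra.algebraMap_eq_smul_one, hφ, Complex.coe_smul]
  obtain ⟨u, hu⟩ := hu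
  apply hne
  calc φ = ((↑u⁻¹ : H →L[ℂ] H) * (↑u : H →L[ℂ] H)) φ := by
        rw [u.inv_mul, ContinuousLinearMap.one_apply]
    _ = 0 := by rw [ContinuousLinearMap.mul_apply, hu, h0, map_zero]

end LWaux

/-- Bounded-operator case of Littlejohn–Wellman's Theorem 3.7: a complete orthogonal
family of (nonzero) eigenvectors of a bounded self-adjoint operator `A` with
`⟪A x, x⟫ ≥ k ⟪x, x⟫`, `k > 0`, remains a complete orthogonal family with respect to
every `r`-th left-definite inner product `⟨x, y⟩_r = ⟪A^{r/2} x, A^{r/2} y⟫`, `r > 0`. -/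
theorem leftDefinite_complete_orthogonal_eigenfunctions
    {H : Type*} [NormedAddCommGroup H] [InnerProductSpace ℂ H] [CompleteSpace H]
    (A : H →L[ℂ] H) (hA : IsSelfAdjoint A) (k : ℝ) (hk : 0 < k)
    (hbound : ∀ x : H, (k : ℂ) * ⟪x, x⟫_ℂ ≤ ⟪A x, x⟫_ℂ)
    {ι : Type*} (φ : ι → H) (lam : ι → ℝ)
    (hne : ∀ i, φ i ≠ 0)
    (heig : ∀ i, A (φ i) = (lam i : ℂ) • φ i)
    (horth : ∀ i j, i ≠ j → ⟪φ i, φ j⟫_ℂ = 0)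
    (hcomplete : Dense ((Submodule.span ℂ (Set.range φ) : Submodule ℂ H) : Set H))
    (r : ℝ) (hr : 0 < r) :
    (∀ i j, i ≠ j → ⟪CFC.rpow A (r / 2) (φ i), CFC.rpow A (r / 2) (φ j)⟫_ℂ = 0) ∧
      ∀ x : H, (∀ i, ⟪CFC.rpow A (r / 2) x, CFC.rpow A (r / 2) (φ i)⟫_ℂ = 0) → x = 0 := by
  have hs : 0 < r / 2 := by positivity
  -- A is positive
  have hApos : (0 : H →L[ℂ] H) ≤ A := by
    rw [ContinuousLinearMap.nonneg_iff_isPositive, ContinuousLinearMap.isPositive_def']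
    refine ⟨hA, fun x => ?_⟩
    have h := (Complex.le_def.mp (hbound x)).1
    have h2 : Complex.re ((k:ℂ) * ⟪x, x⟫_ℂ) = k * Complex.re ⟪x, x⟫_ℂ := by
      simp [Complex.mul_re]
    have h3 : (0:ℝ) ≤ Complex.re ⟪x, x⟫_ℂ := @inner_self_nonneg ℂ _ _ _ _ x
    exact le_trans (by positivity) (h2 ▸ h)
  -- spectrum lower bound
  have hspec : ∀ x ∈ spectrum ℝ A, k ≤ x := by
    intro x hx
    have hBpos : (0 : H →L[ℂ] H) ≤ A - algebraMap ℝ (H →L[ℂ] H) k := by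
      rw [ContinuousLinearMap.nonneg_iff_isPositive, ContinuousLinearMap.isPositive_def']
      constructor
      · refine hA.sub ?_
        rw [Algebra.algebraMap_eq_smul_one, isSelfAdjoint_iff]
        simp [star_smul]
      · intro y
        rw [ContinuousLinearMap.reApplyInnerSelf_apply]
        have h := (Complex.le_def.mp (hbound y)).1
        have hBy : (A - algebraMap ℝ (H →L[ℂ] H) k) y = A y - (k : ℂ) • y := by
          simp [Algebra.algebraMap_eq_smul_one, ContinuousLinearMap.sub_apply,
            Complex.coe_smul]
        rw [hBy, inner_sub_left, inner_smul_left, Complex.conj_ofReal]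
        simp only [RCLike.re_to_complex, Complex.sub_re]
        linarith [h]
    have hmem : -k + x ∈ spectrum ℝ (algebraMap ℝ (H →L[ℂ] H) (-k) + A) := by
      rw [← spectrum.singleton_add_eq]
      exact Set.add_mem_add rfl hx
    have heq : algebraMap ℝ (H →L[ℂ] H) (-k) + A = A - algebraMap ℝ (H →L[ℂ] H) k := by
      rw [map_neg]; abel
    rw [heq] at hmem
    have := spectrum_nonneg_of_nonneg hBpos hmem
    linarith
  -- eigenvalues are ≥ k
  have hlam : ∀ i, k ≤ lam i := by
    intro i
    have h := (Complex.le_def.mp (hbound (φ i))).1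
    rw [heig i, inner_smul_left, Complex.conj_ofReal] at h
    have hn : 0 < Complex.re ⟪φ i, φ i⟫_ℂ := by
      have h4 := @inner_self_eq_norm_sq ℂ _ _ _ _ (φ i)
      simp only [RCLike.re_to_complex] at h4
      rw [h4]
      have : ‖φ i‖ ≠ 0 := norm_ne_zero_iff.mpr (hne i)
      positivity
    have h2 : ∀ c : ℝ, Complex.re ((c:ℂ) * ⟪φ i, φ i⟫_ℂ) = c * Complex.re ⟪φ i, φ i⟫_ℂ := by
      intro c; simp [Complex.mul_re]
    rw [h2, h2] at h
    exact le_of_mul_le_mul_right h hn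
  have hmemspec : ∀ i, lam i ∈ spectrum ℝ A := fun i =>
    LW.mem_spectrum A (lam i) (φ i) (hne i) (heig i)
  -- the r/2 power as a real cfc
  set g : ℝ → ℝ := fun x => ((x.toNNReal ^ (r / 2) : ℝ≥0) : ℝ) with hgdef
  have hg : Continuous g :=
    NNReal.continuous_coe.comp ((NNReal.continuous_rpow_const hs.le).comp
      continuous_real_toNNReal)
  have hBdef : CFC.rpow A (r / 2) = cfc g A := cfc_nnreal_eq_real _ A hApos
  set c : ι → ℝ := fun i => g (lam i) with hcdef
  have hcpos : ∀ i, 0 < c i := by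
    intro i
    have : 0 < (lam i).toNNReal := Real.toNNReal_pos.mpr (lt_of_lt_of_le hk (hlam i))
    exact_mod_cast NNReal.rpow_pos this
  have heigB : ∀ i, CFC.rpow A (r / 2) (φ i) = ((c i : ℝ) : ℂ) • φ i := by
    intro i
    rw [hBdef]
    exact LW.cfc_apply_eigvec A hA (lam i) (hmemspec i) (φ i) (heig i) g hg.continuousOn
  constructor
  · intro i j hij
    rw [heigB i, heigB j, inner_smul_left, inner_smul_right, horth i j hij,
      mul_zero, mul_zero]
  · intro x hx
    have hxi : ∀ i, ⟪CFC.rpow A (r / 2) x, φ i⟫_ℂ = 0 := by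
      intro i
      have h := hx i
      rw [heigB i, inner_smul_right] at h
      have hc0 : ((c i : ℝ) : ℂ) ≠ 0 := by
        exact_mod_cast (hcpos i).ne'
      exact (mul_eq_zero.mp h).resolve_left hc0
    -- density gives rpow x = 0
    have hy : CFC.rpow A (r / 2) x = 0 := by
      set y := CFC.rpow A (r / 2) x
      have hall : (fun z => ⟪y, z⟫_ℂ) = fun _ => (0:ℂ) := by
        refine Continuous.ext_on hcomplete (continuous_const.inner continuous_id) continuous_const
          ?_
        intro z hz
        induction hz using Submodule.span_induction with
        | mem w hw => obtain ⟨i, rfl⟩ := hw; exact hxi i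
        | zero => exact inner_zero_right y
        | add u v _ _ hu hv =>
            simp only at hu hv ⊢
            rw [inner_add_right, hu, hv, add_zero]
        | smul a u _ hu =>
            simp only at hu ⊢
            rw [inner_smul_right, hu, mul_zero]
      have := congrFun hall y
      simpa [inner_self_eq_zero] using this
    -- injectivity of rpow via inverse
    set h : ℝ → ℝ := fun x => x ^ (-(r / 2)) with hhdef
    have hh : ContinuousOn h (spectrum ℝ A) := by
      intro z hz
      exact (Real.continuousAt_rpow_const z _
        (Or.inl (lt_of_lt_of_le hk (hspec z hz)).ne')).continuousWithinAt
    have hinv : cfc h A * cfc g A = 1 := by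
      rw [← cfc_mul h g A hh hg.continuousOn]
      have heq1 : cfc (fun z => h z * g z) A = cfc (fun _ : ℝ => (1:ℝ)) A := by
        refine cfc_congr fun z hz => ?_
        have hz0 : 0 < z := lt_of_lt_of_le hk (hspec z hz)
        have hgz : g z = z ^ (r / 2) := by
          rw [hgdef]
          simp only [NNReal.coe_rpow, Real.coe_toNNReal z hz0.le]
        rw [hhdef, hgz]
        dsimp only
        rw [← Real.rpow_add hz0, neg_add_cancel, Real.rpow_zero]
      rw [heq1, cfc_const_one ℝ A]
    calc x = (1 : H →L[ℂ] H) x := rfl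
      _ = (cfc h A * cfc g A) x := by rw [hinv]
      _ = cfc h A (cfc g A x) := rfl
      _ = cfc h A (CFC.rpow A (r / 2) x) := by rw [hBdef]
      _ = 0 := by rw [hy, map_zero]
end

section
/- Existence of boundary limits of the sesquilinear form on the maximal domain: let a < b be real numbers, let p, q, w : ℝ → ℝ with w(x) > 0 on (a, b), and let f, g : ℝ → ℂ be such that on (a, b) the functions f, g, p·f′, p·g′ are differentiable with continuous derivatives, and such that f, g, ℓ[f], ℓ[g] all belong to L²((a, b), w·dx) (i.e. ∫_a^b |f|² w < ∞, ∫_a^b |ℓ[f]|² w < ∞, and likewise for g), where ℓ[u](x) := −(1/w(x))·((p·u′)′(x) + q(x)·u(x)). Then the limit lim_{x → b⁻} p(x)·( f(x)·conj(g′(x)) − f′(x)·conj(g(x)) ) exists (as a finite complex number); that is, there exists L ∈ ℂ such that the function x ↦ p(x)·( f(x)·conj(g′(x)) − f′(x)·conj(g(x)) ) tends to L as x tends to b from the left. -/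
open scoped InnerProductSpace
open ComplexConjugate MeasureTheory

/-- The Sturm–Liouville differential expression `ℓ[u](x) = −(1/w)((p u′)′ + q u)(x)`
with real coefficients `p, q, w`, applied to a complex-valued function `u`. -/
noncomputable def sturmLiouville (p q w : ℝ → ℝ) (u : ℝ → ℂ) (x : ℝ) : ℂ :=
  -(1 / (w x : ℂ)) * (deriv (fun t => (p t : ℂ) * deriv u t) x + (q x : ℂ) * u x)

/-- Existence of boundary limits of the sesquilinear form on the maximal domain: if
`f, g, ℓ[f], ℓ[g]` all belong to `L²((a, b), w dx)`, then the modified Wronskian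
`[f, g](x) = p(x)(f(x) conj g′(x) − f′(x) conj g(x))` has a finite limit as `x → b⁻`. -/
theorem sesquilinearForm_tendsto_boundary
    (a b : ℝ) (hab : a < b) (p q w : ℝ → ℝ)
    (hw : ∀ x ∈ Set.Ioo a b, 0 < w x)
    (f g : ℝ → ℂ)
    (hf : ∀ x ∈ Set.Ioo a b, DifferentiableAt ℝ f x)
    (hg : ∀ x ∈ Set.Ioo a b, DifferentiableAt ℝ g x)
    (hpf : ∀ x ∈ Set.Ioo a b, DifferentiableAt ℝ (fun t => (p t : ℂ) * deriv f t) x)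
    (hpg : ∀ x ∈ Set.Ioo a b, DifferentiableAt ℝ (fun t => (p t : ℂ) * deriv g t) x)
    (hfc' : ContinuousOn (deriv f) (Set.Ioo a b))
    (hgc' : ContinuousOn (deriv g) (Set.Ioo a b))
    (hpfc' : ContinuousOn (deriv fun t => (p t : ℂ) * deriv f t) (Set.Ioo a b))
    (hpgc' : ContinuousOn (deriv fun t => (p t : ℂ) * deriv g t) (Set.Ioo a b))
    (hfL2 : IntegrableOn (fun x => ‖f x‖ ^ 2 * w x) (Set.Ioo a b))
    (hgL2 : IntegrableOn (fun x => ‖g x‖ ^ 2 * w x) (Set.Ioo a b))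
    (hlfL2 : IntegrableOn (fun x => ‖sturmLiouville p q w f x‖ ^ 2 * w x) (Set.Ioo a b))
    (hlgL2 : IntegrableOn (fun x => ‖sturmLiouville p q w g x‖ ^ 2 * w x) (Set.Ioo a b)) :
    ∃ L : ℂ,
      Filter.Tendsto
        (fun x => (p x : ℂ) * (f x * conj (deriv g x) - deriv f x * conj (g x)))
        (nhdsWithin b (Set.Ioo a b)) (nhds L) := by
  set Pf : ℝ → ℂ := fun t => (p t : ℂ) * deriv f t with hPf
  set Pg : ℝ → ℂ := fun t => (p t : ℂ) * deriv g t with hPg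
  set W : ℝ → ℂ := fun x => (p x : ℂ) * (f x * conj (deriv g x) - deriv f x * conj (g x))
    with hW
  set h : ℝ → ℂ := fun x => f x * conj (deriv Pg x) - deriv Pf x * conj (g x) with hh
  set lf := sturmLiouville p q w f with hlf
  set lg := sturmLiouville p q w g with hlg
  -- W equals f * conj Pg - Pf * conj g
  have Weq : W = fun x => f x * conj (Pg x) - Pf x * conj (g x) := by
    funext x
    simp only [hW, hPf, hPg, map_mul, Complex.conj_ofReal]
    ring
  -- derivative of W
  have hderiv : ∀ x ∈ Set.Ioo a b, HasDerivAt W (h x) x := by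
    intro x hx
    rw [Weq]
    have h1 : HasDerivAt (fun t => f t * conj (Pg t))
        (deriv f x * conj (Pg x) + f x * conj (deriv Pg x)) x :=
      ((hf x hx).hasDerivAt).mul (((hpg x hx).hasDerivAt).star)
    have h2 : HasDerivAt (fun t => Pf t * conj (g t))
        (deriv Pf x * conj (g x) + Pf x * conj (deriv g x)) x :=
      ((hpf x hx).hasDerivAt).mul (((hg x hx).hasDerivAt).star)
    have := h1.sub h2
    have heq : deriv f x * conj (Pg x) + f x * conj (deriv Pg x) -
        (deriv Pf x * conj (g x) + Pf x * conj (deriv g x)) = h x := by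
      simp only [hh, hPf, hPg, map_mul, Complex.conj_ofReal]
      ring
    rwa [heq] at this
  -- h in terms of the Sturm-Liouville expressions
  have hB : ∀ x ∈ Set.Ioo a b,
      h x = (w x : ℂ) * (lf x * conj (g x) - f x * conj (lg x)) := by
    intro x hx
    have hwx : (w x : ℂ) ≠ 0 := by
      exact_mod_cast (hw x hx).ne'
    simp only [hh, hlf, hlg, sturmLiouville, map_mul, map_add, map_neg, map_div₀, map_one,
      Complex.conj_ofReal]
    field_simp
    ring
  -- integrability of h on (a,b)
  have hmeas : MeasureTheory.AEStronglyMeasurable h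
      (MeasureTheory.volume.restrict (Set.Ioo a b)) := by
    have hcont : ContinuousOn h (Set.Ioo a b) := by
      have hfc : ContinuousOn f (Set.Ioo a b) :=
        fun x hx => (hf x hx).continuousAt.continuousWithinAt
      have hgc : ContinuousOn g (Set.Ioo a b) :=
        fun x hx => (hg x hx).continuousAt.continuousWithinAt
      exact (hfc.mul (Complex.continuous_conj.comp_continuousOn hpgc')).sub
        (hpfc'.mul (Complex.continuous_conj.comp_continuousOn hgc))
    exact hcont.aestronglyMeasurable measurableSet_Ioo
  set bound : ℝ → ℝ := fun x =>
    (‖lf x‖ ^ 2 * w x + ‖g x‖ ^ 2 * w x + (‖f x‖ ^ 2 * w x + ‖lg x‖ ^ 2 * w x)) / 2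
    with hbound
  have hboundInt : IntegrableOn bound (Set.Ioo a b) :=
    (((hlfL2.add hgL2).add (hfL2.add hlgL2)).div_const 2)
  have hbnd : ∀ x ∈ Set.Ioo a b, ‖h x‖ ≤ bound x := by
    intro x hx
    have hwx := hw x hx
    rw [hB x hx]
    have : ‖(w x : ℂ) * (lf x * conj (g x) - f x * conj (lg x))‖
        ≤ w x * (‖lf x‖ * ‖g x‖ + ‖f x‖ * ‖lg x‖) := by
      rw [norm_mul, Complex.norm_real, Real.norm_of_nonneg hwx.le]
      refine mul_le_mul_of_nonneg_left ?_ hwx.le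
      calc ‖lf x * conj (g x) - f x * conj (lg x)‖
          ≤ ‖lf x * conj (g x)‖ + ‖f x * conj (lg x)‖ := norm_sub_le _ _
        _ = ‖lf x‖ * ‖g x‖ + ‖f x‖ * ‖lg x‖ := by
            simp [norm_mul]
    refine this.trans ?_
    simp only [hbound]
    nlinarith [sq_nonneg (‖lf x‖ - ‖g x‖), sq_nonneg (‖f x‖ - ‖lg x‖), norm_nonneg (lf x),
      norm_nonneg (g x), norm_nonneg (f x), norm_nonneg (lg x), hwx.le]
  have hInt : IntegrableOn h (Set.Ioo a b) := by
    refine MeasureTheory.Integrable.mono' hboundInt hmeas ?_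
    filter_upwards [MeasureTheory.ae_restrict_mem measurableSet_Ioo] with x hx
    exact hbnd x hx
  -- the midpoint
  set c : ℝ := (a + b) / 2 with hc
  have hcab : c ∈ Set.Ioo a b := ⟨by simp [hc]; linarith, by simp [hc]; linarith⟩
  set l := nhdsWithin b (Set.Ioo a b) with hl
  -- DCT
  set F : ℝ → ℝ → ℂ := fun x t => (Set.Ioc c x).indicator h t with hF
  set G : ℝ → ℂ := Set.indicator (Set.Ioi c) h with hG
  have hDCT : Filter.Tendsto
      (fun x => ∫ t in Set.Ioo a b, F x t) l
      (nhds (∫ t in Set.Ioo a b, G t)) := by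
    refine MeasureTheory.tendsto_integral_filter_of_dominated_convergence
      (fun t => ‖h t‖) ?_ ?_ hInt.norm ?_
    · exact Filter.Eventually.of_forall fun x => hmeas.indicator measurableSet_Ioc
    · exact Filter.Eventually.of_forall fun x =>
        Filter.Eventually.of_forall fun t => norm_indicator_le_norm_self h t
    · filter_upwards [MeasureTheory.ae_restrict_mem measurableSet_Ioo] with t ht
      rcases le_or_gt t c with h1 | h1
      · have : ∀ x, F x t = 0 := fun x => by
          simp [hF, Set.indicator_of_notMem, Set.mem_Ioc, not_lt.mpr h1]
        simp only [this]
        have : G t = 0 := by simp [hG, Set.indicator_of_notMem, not_lt.mpr h1]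
        rw [this]
        exact tendsto_const_nhds
      · have hGt : G t = h t := Set.indicator_of_mem h1 h
        rw [hGt]
        have hev : ∀ᶠ x in l, F x t = h t := by
          have : ∀ᶠ x in l, t < x := by
            have : Set.Ioi t ∈ nhds b := Ioi_mem_nhds ht.2
            exact Filter.Eventually.filter_mono nhdsWithin_le_nhds
              (by filter_upwards [this] with x hx using hx)
          filter_upwards [this] with x hx
          exact Set.indicator_of_mem (Set.mem_Ioc.mpr ⟨h1, hx.le⟩) h
        exact Filter.Tendsto.congr' (Filter.EventuallyEq.symm hev) tendsto_const_nhds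
  -- W x = W c + ∫ F x on Ioo c b
  have key : ∀ x ∈ Set.Ioo c b, W x = W c + ∫ t in Set.Ioo a b, F x t := by
    intro x hx
    have hsub : Set.Icc c x ⊆ Set.Ioo a b := fun t ht =>
      ⟨lt_of_lt_of_le hcab.1 ht.1, lt_of_le_of_lt ht.2 hx.2⟩
    have hcx : c ≤ x := hx.1.le
    have h1 : ∫ y in c..x, h y = W x - W c := by
      refine intervalIntegral.integral_eq_sub_of_hasDerivAt (fun t ht => ?_) ?_
      · exact hderiv t (hsub (by rwa [Set.uIcc_of_le hcx] at ht))
      · exact (hInt.mono_set ((Set.uIcc_of_le hcx).symm ▸ hsub :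
          Set.uIcc c x ⊆ Set.Ioo a b)).intervalIntegrable
    have h2 : ∫ t in Set.Ioo a b, F x t = ∫ y in c..x, h y := by
      rw [intervalIntegral.integral_of_le hcx]
      simp only [hF]
      rw [MeasureTheory.setIntegral_indicator measurableSet_Ioc,
        Set.inter_eq_self_of_subset_right (Set.Ioc_subset_Icc_self.trans hsub)]
    rw [h2, h1]
    ring
  refine ⟨W c + ∫ t in Set.Ioo a b, G t, ?_⟩
  have hev : ∀ᶠ x in l, W c + ∫ t in Set.Ioo a b, F x t = W x := by
    have h1 : ∀ᶠ x in l, x ∈ Set.Ioo a b := self_mem_nhdsWithin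
    have h2 : ∀ᶠ x in l, c < x :=
      Filter.Eventually.filter_mono nhdsWithin_le_nhds (eventually_gt_nhds hcab.2)
    filter_upwards [h1, h2] with x hx1 hx2
    exact (key x (Set.mem_Ioo.mpr ⟨hx2, hx1.2⟩)).symm
  exact Filter.Tendsto.congr' hev (tendsto_const_nhds.add hDCT)
end

section
/- Semi-boundedness from Dirichlet's formula: let [c, d] be a compact interval, a₀, a₁ : ℝ → ℝ with a₀(x) ≥ k > 0 and a₁(x) ≥ 0 for all x ∈ [c, d], and let f : ℝ → ℂ be differentiable on [c, d] with a₁·f′ differentiable on [c, d], all relevant functions continuous on [c, d], and suppose the boundary term vanishes: a₁(d)·f′(d)·conj(f(d)) = a₁(c)·f′(c)·conj(f(c)). With ℓ¹[f](x) := a₀(x)·f(x) − (a₁·f′)′(x), one has re( ∫_c^d ℓ¹[f](x)·conj(f(x)) dx ) ≥ k · ∫_c^d |f(x)|² dx. -/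
open ComplexConjugate intervalIntegral

/-- The Lagrangian symmetric differential expression of order 2 with real coefficient
functions `a₀, a₁`: `ℓ¹[f](x) = a₀(x) f(x) − (a₁ f′)′(x)`. -/
noncomputable def lagrangianSecondOrder (a₀ a₁ : ℝ → ℝ) (f : ℝ → ℂ) (x : ℝ) : ℂ :=
  (a₀ x : ℂ) * f x - deriv (fun t => (a₁ t : ℂ) * deriv f t) x

/-- Semi-boundedness from Dirichlet's formula: if `a₀ ≥ k > 0` and `a₁ ≥ 0` on `[c, d]`
and the boundary term vanishes, then
`re ∫_c^d ℓ¹[f] conj f ≥ k ∫_c^d |f|²`. -/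
theorem lagrangian_semibounded
    (c d : ℝ) (hcd : c ≤ d) (a₀ a₁ : ℝ → ℝ) (k : ℝ) (hk : 0 < k)
    (ha₀ : ∀ x ∈ Set.Icc c d, k ≤ a₀ x)
    (ha₁ : ∀ x ∈ Set.Icc c d, 0 ≤ a₁ x)
    (f : ℝ → ℂ)
    (hf : ∀ x ∈ Set.Icc c d, DifferentiableAt ℝ f x)
    (haf : ∀ x ∈ Set.Icc c d, DifferentiableAt ℝ (fun t => (a₁ t : ℂ) * deriv f t) x)
    (ha₀c : ContinuousOn a₀ (Set.Icc c d)) (ha₁c : ContinuousOn a₁ (Set.Icc c d))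
    (hfc : ContinuousOn f (Set.Icc c d))
    (hfc' : ContinuousOn (deriv f) (Set.Icc c d))
    (hafc' : ContinuousOn (deriv fun t => (a₁ t : ℂ) * deriv f t) (Set.Icc c d))
    (hboundary : (a₁ d : ℂ) * deriv f d * conj (f d) = (a₁ c : ℂ) * deriv f c * conj (f c)) :
    k * ∫ x in c..d, ‖f x‖ ^ 2 ≤
      (∫ x in c..d, lagrangianSecondOrder a₀ a₁ f x * conj (f x)).re := by
  have hIcc : Set.uIcc c d = Set.Icc c d := Set.uIcc_of_le hcd
  set g := fun t => (a₁ t : ℂ) * deriv f t with hgdef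
  -- continuity facts
  have hconj : ContinuousOn (fun x => conj (f x)) (Set.Icc c d) :=
    Complex.continuous_conj.comp_continuousOn hfc
  have hgc : ContinuousOn g (Set.Icc c d) :=
    (Complex.continuous_ofReal.comp_continuousOn ha₁c).mul hfc'
  -- integrability facts
  have int_a0 : IntervalIntegrable (fun x => (a₀ x : ℂ) * (f x * conj (f x))) MeasureTheory.volume c d := by
    apply ContinuousOn.intervalIntegrable
    rw [hIcc]
    exact (Complex.continuous_ofReal.comp_continuousOn ha₀c).mul (hfc.mul hconj)
  have int_dg : IntervalIntegrable (fun x => deriv g x * conj (f x)) MeasureTheory.volume c d := by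
    apply ContinuousOn.intervalIntegrable
    rw [hIcc]
    exact hafc'.mul hconj
  have int_gdf : IntervalIntegrable (fun x => g x * conj (deriv f x)) MeasureTheory.volume c d := by
    apply ContinuousOn.intervalIntegrable
    rw [hIcc]
    exact hgc.mul (Complex.continuous_conj.comp_continuousOn hfc')
  -- integration by parts
  have parts : ∫ x in c..d, (deriv g x * conj (f x) + g x * conj (deriv f x)) =
      g d * conj (f d) - g c * conj (f c) := by
    apply intervalIntegral.integral_deriv_mul_eq_sub
    · intro x hx
      rw [hIcc] at hx
      exact (haf x hx).hasDerivAt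
    · intro x hx
      rw [hIcc] at hx
      exact ((hf x hx).hasDerivAt).star
    · apply ContinuousOn.intervalIntegrable; rw [hIcc]; exact hafc'
    · apply ContinuousOn.intervalIntegrable; rw [hIcc]
      exact Complex.continuous_conj.comp_continuousOn hfc'
  have hb0 : g d * conj (f d) - g c * conj (f c) = 0 := by
    simp only [hgdef]
    rw [hboundary]; ring
  rw [hb0, intervalIntegral.integral_add int_dg int_gdf] at parts
  have key : (∫ x in c..d, lagrangianSecondOrder a₀ a₁ f x * conj (f x)) =
      (∫ x in c..d, (a₀ x : ℂ) * (f x * conj (f x))) + ∫ x in c..d, g x * conj (deriv f x) := by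
    have : (∫ x in c..d, lagrangianSecondOrder a₀ a₁ f x * conj (f x)) =
        (∫ x in c..d, (a₀ x : ℂ) * (f x * conj (f x))) - ∫ x in c..d, deriv g x * conj (f x) := by
      rw [← intervalIntegral.integral_sub int_a0 int_dg]
      apply intervalIntegral.integral_congr
      intro x hx
      simp only [lagrangianSecondOrder, hgdef]
      ring
    rw [this, eq_neg_of_add_eq_zero_left parts, sub_neg_eq_add]
  -- rewrite integrands as real
  have e1 : (∫ x in c..d, (a₀ x : ℂ) * (f x * conj (f x))) =
      ((∫ x in c..d, a₀ x * ‖f x‖ ^ 2 : ℝ) : ℂ) := by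
    rw [← intervalIntegral.integral_ofReal]
    apply intervalIntegral.integral_congr
    intro x hx
    show (a₀ x : ℂ) * (f x * conj (f x)) = _
    rw [Complex.mul_conj]
    push_cast [Complex.normSq_eq_norm_sq]
    ring
  have e2 : (∫ x in c..d, g x * conj (deriv f x)) =
      ((∫ x in c..d, a₁ x * ‖deriv f x‖ ^ 2 : ℝ) : ℂ) := by
    rw [← intervalIntegral.integral_ofReal]
    apply intervalIntegral.integral_congr
    intro x hx
    show (a₁ x : ℂ) * deriv f x * conj (deriv f x) = _
    rw [mul_assoc, Complex.mul_conj]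
    push_cast [Complex.normSq_eq_norm_sq]
    ring
  rw [key, e1, e2, ← Complex.ofReal_add, Complex.ofReal_re]
  -- real estimates
  have h1 : k * ∫ x in c..d, ‖f x‖ ^ 2 ≤ ∫ x in c..d, a₀ x * ‖f x‖ ^ 2 := by
    rw [← intervalIntegral.integral_const_mul]
    apply intervalIntegral.integral_mono_on hcd
    · apply ContinuousOn.intervalIntegrable; rw [hIcc]
      exact continuousOn_const.mul ((hfc.norm).pow 2)
    · apply ContinuousOn.intervalIntegrable; rw [hIcc]
      exact ha₀c.mul ((hfc.norm).pow 2)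
    · intro x hx
      exact mul_le_mul_of_nonneg_right (ha₀ x hx) (by positivity)
  have h2 : 0 ≤ ∫ x in c..d, a₁ x * ‖deriv f x‖ ^ 2 := by
    apply intervalIntegral.integral_nonneg hcd
    intro x hx
    exact mul_nonneg (ha₁ x hx) (by positivity)
  linarith
end

section
/- Von Neumann's formula: let A be a densely defined unbounded operator on a complex Hilbert space H that is symmetric (⟨A x, y⟩ = ⟨x, A y⟩ for all x, y ∈ dom(A)) and closed (its graph is a closed subset of H × H), and let A* denote its adjoint. Then every x ∈ dom(A*) can be written uniquely as x = x₀ + x₊ + x₋, where x₀ ∈ dom(A), x₊ ∈ dom(A*) with A* x₊ = i • x₊, and x₋ ∈ dom(A*) with A* x₋ = −i • x₋. That is, dom(A*) is the direct sum of dom(A), the positive defect space D₊ = { u ∈ dom(A*) : A* u = i u }, and the negative defect space D₋ = { u ∈ dom(A*) : A* u = −i u }. -/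
open scoped InnerProductSpace
open LinearPMap
open scoped NNReal

namespace VNAux

variable {H : Type*} [NormedAddCommGroup H] [InnerProductSpace ℂ H] [CompleteSpace H]
variable {A : H →ₗ.[ℂ] H}

omit [CompleteSpace H] in
theorem pyth (hsym : ∀ x y : A.domain, ⟪A x, (y : H)⟫_ℂ = ⟪(x : H), A y⟫_ℂ)
    (u : A.domain) :
    ‖A u - Complex.I • (u : H)‖ ^ 2 = ‖A u‖ ^ 2 + ‖(u : H)‖ ^ 2 := by
  have him : (⟪A u, (u : H)⟫_ℂ).im = 0 := by
    have : (starRingEnd ℂ) ⟪A u, (u : H)⟫_ℂ = ⟪A u, (u : H)⟫_ℂ := by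
      rw [inner_conj_symm]; exact (hsym u u).symm
    exact (Complex.conj_eq_iff_im.mp this)
  have hre : RCLike.re ⟪A u, Complex.I • (u : H)⟫_ℂ = 0 := by
    rw [inner_smul_right]
    simp [Complex.mul_re, him]
  rw [@norm_sub_sq ℂ, hre]
  simp [norm_smul]

/-- The operator `u ↦ A u - i u` on the domain of `A`. -/
noncomputable def defectOp (A : H →ₗ.[ℂ] H) : A.domain →ₗ[ℂ] H :=
  A.toFun - Complex.I • A.domain.subtype

omit [CompleteSpace H] in
theorem defectOp_apply (u : A.domain) : defectOp A u = A u - Complex.I • (u : H) := rfl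

set_option maxHeartbeats 2000000 in
theorem range_defectOp_closed
    (hsym : ∀ x y : A.domain, ⟪A x, (y : H)⟫_ℂ = ⟪(x : H), A y⟫_ℂ)
    (hclosed : IsClosed (A.graph : Set (H × H))) :
    IsClosed ((LinearMap.range (defectOp A) : Submodule ℂ H) : Set H) := by
  haveI : CompleteSpace A.graph := hclosed.completeSpace_coe
  set Φ : (H × H) →L[ℂ] H :=
    ContinuousLinearMap.snd ℂ H H - Complex.I • ContinuousLinearMap.fst ℂ H H with hΦ
  set f : A.graph →L[ℂ] H := Φ.comp (Submodule.subtypeL A.graph) with hf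
  have hfap : ∀ g : A.graph, f g = (g : H × H).2 - Complex.I • (g : H × H).1 := fun g => rfl
  have hb : ∀ g : A.graph, ‖g‖ ≤ (1 : ℝ≥0) * ‖f g‖ := by
    intro g
    obtain ⟨gv, hg⟩ := g
    obtain ⟨u, hu⟩ := A.mem_graph_iff'.mp hg
    subst hu
    have h2 : f ⟨((u : H), A u), hg⟩ = A u - Complex.I • (u : H) := rfl
    have hp := pyth hsym u
    have h3 : ‖(⟨((u : H), A u), hg⟩ : A.graph)‖ = max ‖(u : H)‖ ‖A u‖ := by
      have h0 : ‖(⟨((u : H), A u), hg⟩ : A.graph)‖ = ‖((u : H), A u)‖ := rfl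
      rw [h0, Prod.norm_def]
    rw [h3, h2]
    have key : ∀ a c b : ℝ, 0 ≤ a → 0 ≤ b → 0 ≤ c → b ^ 2 = c ^ 2 + a ^ 2 → a ⊔ c ≤ b := by
      intro a c b ha hb hc h
      have h4 : a ≤ b := by nlinarith
      have h5 : c ≤ b := by nlinarith
      exact max_le h4 h5
    have hkey := key ‖(u : H)‖ ‖A u‖ ‖A u - Complex.I • (u : H)‖ (norm_nonneg _) (norm_nonneg _)
      (norm_nonneg _) hp
    simpa using hkey
  have hanti := f.antilipschitz_of_bound hb
  have hrange : Set.range f = ((LinearMap.range (defectOp A) : Submodule ℂ H) : Set H) := by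
    ext w
    constructor
    · rintro ⟨g, rfl⟩
      obtain ⟨gv, hg⟩ := g
      obtain ⟨u, hu⟩ := A.mem_graph_iff'.mp hg
      subst hu
      exact ⟨u, rfl⟩
    · rintro ⟨u, rfl⟩
      exact ⟨⟨((u : H), A u), A.mem_graph u⟩, rfl⟩
  rw [← hrange]
  exact hanti.isClosed_range f.uniformContinuous

theorem mem_orth_iff (hdense : Dense (A.domain : Set H)) (y : H) :
    y ∈ (LinearMap.range (defectOp A))ᗮ ↔
      ∃ hy : y ∈ A.adjoint.domain, A.adjoint ⟨y, hy⟩ = (-Complex.I) • y := by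
  constructor
  · intro h
    have key : ∀ u : A.domain, ⟪(-Complex.I) • y, (u : H)⟫_ℂ = ⟪y, A u⟫_ℂ := by
      intro u
      have h0 : ⟪A u - Complex.I • (u : H), y⟫_ℂ = 0 :=
        (Submodule.mem_orthogonal _ y).mp h _ ⟨u, rfl⟩
      rw [inner_sub_left, sub_eq_zero, inner_smul_left] at h0
      have h1 := congrArg (starRingEnd ℂ) h0
      rw [inner_conj_symm, map_mul, inner_conj_symm] at h1
      rw [inner_smul_left, h1]
      simp [Complex.conj_I]
    have hy : y ∈ A.adjoint.domain :=
      mem_adjoint_domain_of_exists y ⟨(-Complex.I) • y, key⟩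
    exact ⟨hy, adjoint_apply_eq hdense ⟨y, hy⟩ key⟩
  · rintro ⟨hy, hvy⟩
    rw [Submodule.mem_orthogonal]
    rintro w ⟨u, rfl⟩
    have h := (A.adjoint_isFormalAdjoint hdense) ⟨y, hy⟩ u
    rw [hvy, inner_smul_left] at h
    have h1 := congrArg (starRingEnd ℂ) h
    rw [map_mul, inner_conj_symm, inner_conj_symm] at h1
    rw [defectOp_apply, inner_sub_left, sub_eq_zero, ← h1, inner_smul_left]
    simp [Complex.conj_I]


variable (hdense : Dense (A.domain : Set H))
    (hsym : ∀ x y : A.domain, ⟪A x, (y : H)⟫_ℂ = ⟪(x : H), A y⟫_ℂ)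

include hdense

theorem inner_defect' {p : H} {c : ℂ} (hp : p ∈ A.adjoint.domain)
    (hvp : A.adjoint ⟨p, hp⟩ = c • p) (u : A.domain) :
    ⟪A u, p⟫_ℂ = c * ⟪(u : H), p⟫_ℂ := by
  have h := (A.adjoint_isFormalAdjoint hdense) ⟨p, hp⟩ u
  rw [hvp, inner_smul_left] at h
  have h2 := congrArg (starRingEnd ℂ) h
  rw [map_mul, inner_conj_symm, inner_conj_symm] at h2
  simpa using h2.symm

include hsym

theorem le_adj' : A ≤ A.adjoint :=
  (LinearPMap.IsFormalAdjoint.le_adjoint hdense (fun u v => hsym u v))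

theorem adj_ext' {u : H} (hu : u ∈ A.domain) (hu' : u ∈ A.adjoint.domain) :
    A.adjoint ⟨u, hu'⟩ = A ⟨u, hu⟩ :=
  ((le_adj' hdense hsym).2 (x := ⟨u, hu⟩) (y := ⟨u, hu'⟩) rfl).symm

theorem zero_of_sum_eq_zero
    {a p m : H} (ha : a ∈ A.domain)
    (hp : p ∈ A.adjoint.domain) (hvp : A.adjoint ⟨p, hp⟩ = Complex.I • p)
    (hm : m ∈ A.adjoint.domain) (hvm : A.adjoint ⟨m, hm⟩ = (-Complex.I) • m)
    (hsum : a + p + m = 0) : a = 0 ∧ p = 0 ∧ m = 0 := by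
  have ha' : a ∈ A.adjoint.domain := (le_adj' hdense hsym).1 ha
  have hS : a + p + m ∈ A.adjoint.domain := add_mem (add_mem ha' hp) hm
  have hrepr : (⟨a + p + m, hS⟩ : A.adjoint.domain) =
      (⟨a, ha'⟩ : A.adjoint.domain) + ⟨p, hp⟩ + ⟨m, hm⟩ := rfl
  have h0 : (⟨a + p + m, hS⟩ : A.adjoint.domain) = 0 := by
    ext; simpa using hsum
  have e1 : A.adjoint ⟨a + p + m, hS⟩
      = A ⟨a, ha⟩ + Complex.I • p + (-Complex.I) • m := by
    rw [hrepr, A.adjoint.map_add, A.adjoint.map_add, hvp, hvm,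
      adj_ext' hdense hsym ha ha']
  have e2 : A.adjoint ⟨a + p + m, hS⟩ = 0 := by rw [h0, A.adjoint.map_zero]
  have hval : A ⟨a, ha⟩ + Complex.I • p + (-Complex.I) • m = 0 := by
    rw [← e1, e2]
  have hip : ⟪A ⟨a, ha⟩, p⟫_ℂ = Complex.I * ⟪a, p⟫_ℂ :=
    inner_defect' hdense hp hvp ⟨a, ha⟩
  have him : ⟪A ⟨a, ha⟩, m⟫_ℂ = (-Complex.I) * ⟪a, m⟫_ℂ :=
    inner_defect' hdense hm hvm ⟨a, ha⟩
  have hz : ⟪a, a + p + m⟫_ℂ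
      + ⟪A ⟨a, ha⟩, A ⟨a, ha⟩ + Complex.I • p + (-Complex.I) • m⟫_ℂ = 0 := by
    rw [hsum, hval]; simp
  rw [inner_add_right, inner_add_right, inner_add_right, inner_add_right,
    inner_smul_right, inner_smul_right, hip, him] at hz
  have hexp : ⟪(a : H), a⟫_ℂ + ⟪A ⟨a, ha⟩, A ⟨a, ha⟩⟫_ℂ = 0 := by
    linear_combination hz - (⟪(a : H), p⟫_ℂ + ⟪(a : H), m⟫_ℂ) * Complex.I_sq
  have hnr : ‖a‖ ^ 2 + ‖A ⟨a, ha⟩‖ ^ 2 = 0 := by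
    have h6 := congrArg Complex.re hexp
    rw [Complex.add_re] at h6
    rw [← inner_self_eq_norm_sq (𝕜 := ℂ) (a : H), ← inner_self_eq_norm_sq (𝕜 := ℂ) (A ⟨a, ha⟩)]
    exact h6
  have ha0 : a = 0 := by
    have : ‖a‖ = 0 := by nlinarith [sq_nonneg ‖a‖, sq_nonneg ‖A ⟨a, ha⟩‖, norm_nonneg a]
    exact norm_eq_zero.mp this
  have hA0 : A ⟨a, ha⟩ = 0 := by
    have : (⟨a, ha⟩ : A.domain) = 0 := by ext; simpa using ha0
    rw [this, A.map_zero]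
  have hpm : p + m = 0 := by
    rw [ha0, zero_add] at hsum; exact hsum
  have hpm2 : Complex.I • p + (-Complex.I) • m = 0 := by
    rw [hA0, zero_add] at hval; exact hval
  have hp' : p = -m := eq_neg_of_add_eq_zero_left hpm
  rw [hp', smul_neg, ← neg_smul, ← add_smul] at hpm2
  have hm0 : m = 0 := by
    rcases smul_eq_zero.mp hpm2 with h | h
    · exact absurd h (by simp [Complex.ext_iff])
    · exact h
  have hp0 : p = 0 := by rw [hp', hm0, neg_zero]
  exact ⟨ha0, hp0, hm0⟩


end VNAux

/-- Von Neumann's formula: if `A` is a densely defined, symmetric, closed unbounded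
operator on a complex Hilbert space `H`, then every `x` in the domain of the adjoint
`A*` can be written uniquely as `x = x₀ + x₊ + x₋`, where `x₀ ∈ dom A`,
`x₊ ∈ dom A*` with `A* x₊ = i x₊`, and `x₋ ∈ dom A*` with `A* x₋ = −i x₋`. -/
theorem vonNeumann_formula
    {H : Type*} [NormedAddCommGroup H] [InnerProductSpace ℂ H] [CompleteSpace H]
    (A : H →ₗ.[ℂ] H) (hdense : Dense (A.domain : Set H))
    (hsym : ∀ x y : A.domain, ⟪A x, (y : H)⟫_ℂ = ⟪(x : H), A y⟫_ℂ)
    (hclosed : IsClosed (A.graph : Set (H × H)))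
    (x : H) (hx : x ∈ A.adjoint.domain) :
    ∃! d : H × H × H,
      d.1 ∈ A.domain ∧
        (∃ h : d.2.1 ∈ A.adjoint.domain, A.adjoint ⟨d.2.1, h⟩ = Complex.I • d.2.1) ∧
        (∃ h : d.2.2 ∈ A.adjoint.domain, A.adjoint ⟨d.2.2, h⟩ = (-Complex.I) • d.2.2) ∧
        x = d.1 + d.2.1 + d.2.2 := by
  classical
  have hRclosed := VNAux.range_defectOp_closed hsym hclosed
  haveI : CompleteSpace (LinearMap.range (VNAux.defectOp A)) := hRclosed.completeSpace_coe
  obtain ⟨r, hrR, w, hwO, hzz⟩ :=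
    (LinearMap.range (VNAux.defectOp A)).exists_add_mem_mem_orthogonal
      (A.adjoint ⟨x, hx⟩ - Complex.I • x)
  obtain ⟨u₀, hu₀⟩ := hrR
  obtain ⟨hw, hvw⟩ := (VNAux.mem_orth_iff hdense w).mp hwO
  have hx₀dom : (u₀ : H) ∈ A.domain := u₀.2
  have hx₀dom' : (u₀ : H) ∈ A.adjoint.domain := (VNAux.le_adj' hdense hsym).1 hx₀dom
  have hxmdom : (Complex.I / 2) • w ∈ A.adjoint.domain := Submodule.smul_mem _ _ hw
  have hxmval : A.adjoint ⟨(Complex.I / 2) • w, hxmdom⟩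
      = (-Complex.I) • ((Complex.I / 2) • w) := by
    have h1 : (⟨(Complex.I / 2) • w, hxmdom⟩ : A.adjoint.domain)
        = (Complex.I / 2) • (⟨w, hw⟩ : A.adjoint.domain) := rfl
    rw [h1, A.adjoint.map_smul, hvw, smul_smul, smul_smul]
    congr 1
    ring
  have hxpdom : x - (u₀ : H) - (Complex.I / 2) • w ∈ A.adjoint.domain :=
    sub_mem (sub_mem hx hx₀dom') hxmdom
  have hAu : A u₀ = r + Complex.I • (u₀ : H) := by
    have h := hu₀
    rw [VNAux.defectOp_apply] at h
    rw [← h]; abel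
  have hAx : A.adjoint ⟨x, hx⟩ = r + w + Complex.I • x := by
    rw [← hzz]; abel
  have hxpval : A.adjoint ⟨x - (u₀ : H) - (Complex.I / 2) • w, hxpdom⟩
      = Complex.I • (x - (u₀ : H) - (Complex.I / 2) • w) := by
    have h1 : (⟨x - (u₀ : H) - (Complex.I / 2) • w, hxpdom⟩ : A.adjoint.domain)
        = (⟨x, hx⟩ : A.adjoint.domain) - ⟨(u₀ : H), hx₀dom'⟩ - ⟨(Complex.I / 2) • w, hxmdom⟩ :=
      rfl
    rw [h1, A.adjoint.map_sub, A.adjoint.map_sub, hxmval,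
      VNAux.adj_ext' hdense hsym hx₀dom hx₀dom', hAx]
    have h2 : A ⟨(u₀ : H), hx₀dom⟩ = A u₀ := rfl
    rw [h2, hAu]
    match_scalars
    all_goals try ring
    rw [Complex.I_sq]
    ring
  refine ⟨((u₀ : H), (x - (u₀ : H) - (Complex.I / 2) • w, (Complex.I / 2) • w)),
    ⟨hx₀dom, ⟨hxpdom, hxpval⟩, ⟨hxmdom, hxmval⟩, by module⟩, ?_⟩
  rintro ⟨a, p, m⟩ ⟨hadom, ⟨hpdom, hpval⟩, ⟨hmdom, hmval⟩, hsum⟩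
  have hsum' : x = (u₀ : H) + (x - (u₀ : H) - (Complex.I / 2) • w) + (Complex.I / 2) • w := by
    abel
  have hdiffp : A.adjoint ⟨p - (x - (u₀ : H) - (Complex.I / 2) • w),
      sub_mem hpdom hxpdom⟩ = Complex.I • (p - (x - (u₀ : H) - (Complex.I / 2) • w)) := by
    have h1 : (⟨p - (x - (u₀ : H) - (Complex.I / 2) • w), sub_mem hpdom hxpdom⟩ :
        A.adjoint.domain) = (⟨p, hpdom⟩ : A.adjoint.domain) - ⟨_, hxpdom⟩ := rfl
    rw [h1, A.adjoint.map_sub, hpval, hxpval]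
    module
  have hdiffm : A.adjoint ⟨m - (Complex.I / 2) • w, sub_mem hmdom hxmdom⟩
      = (-Complex.I) • (m - (Complex.I / 2) • w) := by
    have h1 : (⟨m - (Complex.I / 2) • w, sub_mem hmdom hxmdom⟩ : A.adjoint.domain)
        = (⟨m, hmdom⟩ : A.adjoint.domain) - ⟨_, hxmdom⟩ := rfl
    rw [h1, A.adjoint.map_sub, hmval, hxmval]
    module
  have hsum0 : (a - (u₀ : H)) + (p - (x - (u₀ : H) - (Complex.I / 2) • w))
      + (m - (Complex.I / 2) • w) = 0 := by
    have h2 : (a - (u₀ : H)) + (p - (x - (u₀ : H) - (Complex.I / 2) • w))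
        + (m - (Complex.I / 2) • w)
        = (a + p + m) - ((u₀ : H) + (x - (u₀ : H) - (Complex.I / 2) • w)
          + (Complex.I / 2) • w) := by module
    rw [h2, ← hsum, ← hsum', sub_self]
  obtain ⟨e1, e2, e3⟩ := VNAux.zero_of_sum_eq_zero hdense hsym
    (sub_mem hadom hx₀dom) (sub_mem hpdom hxpdom) hdiffp (sub_mem hmdom hxmdom) hdiffm hsum0
  refine Prod.ext (sub_eq_zero.mp e1) (Prod.ext (sub_eq_zero.mp e2) (sub_eq_zero.mp e3))
end
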